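/- arXiv:1805.10131 — 2 statements merged into one kernel-verified Lean document; each statement's English description precedes it below -/
import Mathlib

section
/- If A is a bijective bounded right linear operator between right quaternionic Hilbert spaces and K is compact, then A + K is a Fredholm operator. -/
noncomputable section

open MulOpposite RealInnerProductSpace Filter Topology Metric Set

local notation "ℍ" => Quaternion ℝ

section RieszTheory

set_option linter.unusedSectionVars false

variable {V : Type*} [NormedAddCommGroup V] [InnerProductSpace ℝ V] [CompleteSpace V]

/-- Kernel of `I + C` is finite dimensional. -/
theorem riesz_ker (C S : V →L[ℝ] V) (hC : IsCompactOperator ⇑C) (hS : ∀ x, S x = x + C x) :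
    FiniteDimensional ℝ (LinearMap.ker (S : V →ₗ[ℝ] V)) := by
  obtain ⟨M, hM, hMsub⟩ :=
    IsCompactOperator.image_closedBall_subset_compact (f := (C : V →ₗ[ℝ] V)) hC 1
  have hset : (Subtype.val '' (closedBall (0 : LinearMap.ker (S : V →ₗ[ℝ] V)) 1) : Set V)
      = {x : V | x ∈ LinearMap.ker (S : V →ₗ[ℝ] V) ∧ ‖x‖ ≤ 1} := by
    ext y
    constructor
    · rintro ⟨x, hx, rfl⟩
      exact ⟨x.2, by simpa [mem_closedBall_zero_iff] using hx⟩
    · rintro ⟨hy, hy1⟩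
      exact ⟨⟨y, hy⟩, by simpa [mem_closedBall_zero_iff] using hy1, rfl⟩
  have hclosed : IsClosed {x : V | x ∈ LinearMap.ker (S : V →ₗ[ℝ] V) ∧ ‖x‖ ≤ 1} := by
    have h1 : IsClosed (LinearMap.ker (S : V →ₗ[ℝ] V) : Set V) := ContinuousLinearMap.isClosed_ker S
    have h2 : IsClosed (closedBall (0 : V) 1) := Metric.isClosed_closedBall
    have : {x : V | x ∈ LinearMap.ker (S : V →ₗ[ℝ] V) ∧ ‖x‖ ≤ 1}
        = (LinearMap.ker (S : V →ₗ[ℝ] V) : Set V) ∩ closedBall (0 : V) 1 := by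
      ext x; simp [mem_closedBall_zero_iff]
    rw [this]; exact h1.inter h2
  have hsub : {x : V | x ∈ LinearMap.ker (S : V →ₗ[ℝ] V) ∧ ‖x‖ ≤ 1} ⊆ -M := by
    rintro x ⟨hx, hx1⟩
    have hx0 : S x = 0 := hx
    have h2 : x + C x = 0 := by rw [← hS x, hx0]
    have hcx : C x = -x := eq_neg_of_add_eq_zero_right h2
    rw [Set.mem_neg, ← hcx]
    exact hMsub ⟨x, by simpa [mem_closedBall_zero_iff] using hx1, rfl⟩
  have hcpt : IsCompact (closedBall (0 : LinearMap.ker (S : V →ₗ[ℝ] V)) 1) := by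
    rw [Subtype.isCompact_iff, hset]
    exact hM.neg.of_isClosed_subset hclosed hsub
  exact FiniteDimensional.of_isCompact_closedBall₀ ℝ one_pos hcpt

/-- `I + C` is bounded below on the orthogonal complement of its kernel. -/
theorem riesz_bddBelow (C S : V →L[ℝ] V) (hC : IsCompactOperator ⇑C)
    (hS : ∀ x, S x = x + C x) :
    ∃ c : ℝ, 0 < c ∧ ∀ x ∈ (LinearMap.ker (S : V →ₗ[ℝ] V))ᗮ, c * ‖x‖ ≤ ‖S x‖ := by
  obtain ⟨M, hM, hMsub⟩ :=
    IsCompactOperator.image_closedBall_subset_compact (f := (C : V →ₗ[ℝ] V)) hC 1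
  by_contra h
  push_neg at h
  have hex : ∀ n : ℕ, ∃ x ∈ (LinearMap.ker (S : V →ₗ[ℝ] V))ᗮ, ‖S x‖ < (1 / (n + 1)) * ‖x‖ := by
    intro n
    obtain ⟨x, hx, hlt⟩ := h (1 / (n + 1)) (by positivity)
    exact ⟨x, hx, hlt⟩
  choose x hxmem hxlt using hex
  have hxne : ∀ n, x n ≠ 0 := by
    intro n hn
    have := hxlt n
    rw [hn] at this
    simp at this
  set u : ℕ → V := fun n => ‖x n‖⁻¹ • x n with hu
  have hunorm : ∀ n, ‖u n‖ = 1 := by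
    intro n
    rw [hu]
    simp [norm_smul, inv_mul_cancel₀ (norm_ne_zero_iff.2 (hxne n))]
  have humem : ∀ n, u n ∈ (LinearMap.ker (S : V →ₗ[ℝ] V))ᗮ := fun n =>
    Submodule.smul_mem _ _ (hxmem n)
  have huS : ∀ n, ‖S (u n)‖ < 1 / (n + 1) := by
    intro n
    rw [hu]
    simp only [map_smul, norm_smul, norm_inv, norm_norm]
    calc ‖x n‖⁻¹ * ‖S (x n)‖ < ‖x n‖⁻¹ * ((1 / (n + 1)) * ‖x n‖) := by
          apply mul_lt_mul_of_pos_left (hxlt n)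
          exact inv_pos.2 (norm_pos_iff.2 (hxne n))
      _ = 1 / (n + 1) := by
          rw [mul_comm, mul_assoc, mul_inv_cancel₀ (norm_ne_zero_iff.2 (hxne n)), mul_one]
  have hCu : ∀ n, C (u n) ∈ M := fun n =>
    hMsub ⟨u n, by simp [mem_closedBall_zero_iff, hunorm n], rfl⟩
  obtain ⟨y, _, φ, hφ, hconv⟩ := hM.tendsto_subseq hCu
  have hS0 : Tendsto (fun n => S (u (φ n))) atTop (𝓝 0) := by
    rw [tendsto_iff_norm_sub_tendsto_zero]
    apply squeeze_zero (fun n => norm_nonneg _) (fun n => ?_)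
      tendsto_one_div_add_atTop_nhds_zero_nat
    simp only [sub_zero]
    calc ‖S (u (φ n))‖ ≤ 1 / (φ n + 1) := (huS (φ n)).le
      _ ≤ 1 / (n + 1) := by
          apply one_div_le_one_div_of_le (by positivity)
          have h3 : (n : ℝ) ≤ φ n := by exact_mod_cast hφ.le_apply
          linarith
  have huconv : Tendsto (fun n => u (φ n)) atTop (𝓝 (0 - y)) := by
    refine (hS0.sub hconv).congr fun n => ?_
    have := hS (u (φ n))
    simp only [Function.comp]
    rw [this]
    abel
  rw [zero_sub] at huconv
  have hym : -y ∈ (LinearMap.ker (S : V →ₗ[ℝ] V))ᗮ := by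
    have hcl : IsClosed ((LinearMap.ker (S : V →ₗ[ℝ] V))ᗮ : Set V) := Submodule.isClosed_orthogonal _
    exact hcl.mem_of_tendsto huconv (Eventually.of_forall fun n => humem (φ n))
  have hySker : -y ∈ LinearMap.ker (S : V →ₗ[ℝ] V) := by
    have h1 : Tendsto (fun n => S (u (φ n))) atTop (𝓝 (S (-y))) :=
      (S.continuous.tendsto _).comp huconv
    have : S (-y) = 0 := tendsto_nhds_unique h1 hS0
    exact this
  have : -y = 0 := by
    have := (Submodule.orthogonal_disjoint (LinearMap.ker (S : V →ₗ[ℝ] V))).le_bot ⟨hySker, hym⟩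
    simpa using this
  have hnorm : ‖-y‖ = 1 := by
    have h1 : Tendsto (fun n => ‖u (φ n)‖) atTop (𝓝 ‖-y‖) := huconv.norm
    have h2 : Tendsto (fun n => ‖u (φ n)‖) atTop (𝓝 1) := by
      simp only [hunorm]; exact tendsto_const_nhds
    exact tendsto_nhds_unique h1 h2
  rw [this] at hnorm
  simp at hnorm

theorem riesz_range_closed (C S : V →L[ℝ] V) (hC : IsCompactOperator ⇑C)
    (hS : ∀ x, S x = x + C x) : IsClosed ((LinearMap.range (S : V →ₗ[ℝ] V) : Submodule ℝ V) : Set V) := by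
  haveI hfd : FiniteDimensional ℝ (LinearMap.ker (S : V →ₗ[ℝ] V)) := riesz_ker C S hC hS
  haveI : CompleteSpace (LinearMap.ker (S : V →ₗ[ℝ] V)) := FiniteDimensional.complete ℝ _
  obtain ⟨c, hc, hcb⟩ := riesz_bddBelow C S hC hS
  set N := (LinearMap.ker (S : V →ₗ[ℝ] V))ᗮ with hN
  haveI : CompleteSpace N := (Submodule.isClosed_orthogonal _).completeSpace_coe
  set f : N →L[ℝ] V := S.comp (Submodule.subtypeL N) with hf
  have hbound : ∀ x : N, ‖x‖ ≤ ((c⁻¹).toNNReal : ℝ) * ‖f x‖ := by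
    intro x
    have h1 := hcb x x.2
    have hcoe : ((c⁻¹).toNNReal : ℝ) = c⁻¹ := Real.coe_toNNReal _ (by positivity)
    rw [hcoe]
    have hx : ‖(x : V)‖ = ‖x‖ := rfl
    rw [← hx]
    calc ‖(x : V)‖ = c⁻¹ * (c * ‖(x : V)‖) := by field_simp
      _ ≤ c⁻¹ * ‖S (x : V)‖ := by
          apply mul_le_mul_of_nonneg_left h1 (by positivity)
      _ = c⁻¹ * ‖f x‖ := rfl
  have hanti : AntilipschitzWith (c⁻¹).toNNReal f := f.antilipschitz_of_bound hbound
  have hclosedrange : IsClosed (Set.range f) := hanti.isClosed_range f.uniformContinuous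
  have hsets : ((LinearMap.range (S : V →ₗ[ℝ] V) : Submodule ℝ V) : Set V) = Set.range f := by
    apply Set.Subset.antisymm
    · rintro _ ⟨x, rfl⟩
      have hdec : x - (Submodule.orthogonalProjection (LinearMap.ker (S : V →ₗ[ℝ] V)) x : V) ∈ N :=
        Submodule.sub_starProjection_mem_orthogonal (K := LinearMap.ker (S : V →ₗ[ℝ] V)) x
      refine ⟨⟨_, hdec⟩, ?_⟩
      show S (x - (Submodule.orthogonalProjection (LinearMap.ker (S : V →ₗ[ℝ] V)) x : V)) = S x
      have hker : S ((Submodule.orthogonalProjection (LinearMap.ker (S : V →ₗ[ℝ] V)) x : V)) = 0 :=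
        (Submodule.orthogonalProjection (LinearMap.ker (S : V →ₗ[ℝ] V)) x).2
      rw [map_sub, hker, sub_zero]
    · rintro _ ⟨x, rfl⟩
      exact ⟨(x : V), rfl⟩
  rw [hsets]
  exact hclosedrange

theorem riesz_coker (C S : V →L[ℝ] V) (hC : IsCompactOperator ⇑C)
    (hS : ∀ x, S x = x + C x) :
    FiniteDimensional ℝ (V ⧸ LinearMap.range (S : V →ₗ[ℝ] V)) := by
  obtain ⟨M, hM, hMsub⟩ :=
    IsCompactOperator.image_closedBall_subset_compact (f := (C : V →ₗ[ℝ] V)) hC 1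
  set p : Submodule ℝ V := LinearMap.range (S : V →ₗ[ℝ] V) with hp
  have hWC : ∀ w : V, w ∈ pᗮ → ‖w‖ ≤ ‖C w‖ := by
    intro w hw
    have h0 : (inner ℝ (S w) w : ℝ) = 0 := (Submodule.mem_orthogonal p w).1 hw _ ⟨w, rfl⟩
    have h1 : (inner ℝ w w : ℝ) + inner ℝ (C w) w = 0 := by
      rw [← inner_add_left, ← hS w]
      exact h0
    have h2 : ‖w‖ * ‖w‖ ≤ ‖C w‖ * ‖w‖ := by
      have h3 : (inner ℝ w w : ℝ) = ‖w‖ * ‖w‖ := real_inner_self_eq_norm_mul_norm w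
      have h4 : (inner ℝ (-(C w)) w : ℝ) ≤ ‖-(C w)‖ * ‖w‖ := real_inner_le_norm _ _
      rw [inner_neg_left, norm_neg] at h4
      linarith
    rcases ((norm_nonneg w).eq_or_lt.imp Eq.symm id) with h0' | h0'
    · rw [h0']; exact norm_nonneg _
    · exact le_of_mul_le_mul_right h2 h0'
  set g : pᗮ →L[ℝ] V := C.comp (Submodule.subtypeL pᗮ) with hg
  have hganti : AntilipschitzWith 1 g := by
    apply g.antilipschitz_of_bound
    intro x
    simpa [hg] using hWC x x.2
  haveI : CompleteSpace pᗮ := (Submodule.isClosed_orthogonal _).completeSpace_coe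
  have htb : TotallyBounded (closedBall (0 : pᗮ) 1) := by
    rw [← totallyBounded_image_iff
      (hganti.isUniformEmbedding g.uniformContinuous).toIsUniformInducing]
    apply hM.totallyBounded.subset
    rintro _ ⟨x, hx, rfl⟩
    exact hMsub ⟨x, by simpa [mem_closedBall_zero_iff] using hx, rfl⟩
  have hcpt : IsCompact (closedBall (0 : pᗮ) 1) :=
    htb.isCompact_of_isClosed Metric.isClosed_closedBall
  haveI hWfd : FiniteDimensional ℝ pᗮ :=
    FiniteDimensional.of_isCompact_closedBall₀ ℝ one_pos hcpt
  have hclosed : IsClosed (p : Set V) := riesz_range_closed C S hC hS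
  haveI : CompleteSpace p := hclosed.completeSpace_coe
  have hcompl : IsCompl p pᗮ := Submodule.isCompl_orthogonal_of_hasOrthogonalProjection
  exact LinearEquiv.finiteDimensional (Submodule.quotientEquivOfIsCompl p pᗮ hcompl).symm

end RieszTheory

/-- If `A` is a bijective bounded right linear operator between right quaternionic Hilbert
spaces and `K` is compact, then `A + K` is Fredholm. -/
theorem bijective_add_compact_fredholm
    {V U : Type*}
    [NormedAddCommGroup V] [InnerProductSpace ℝ V] [CompleteSpace V]
    [Module ℍᵐᵒᵖ V] [IsScalarTower ℝ ℍᵐᵒᵖ V]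
    [NormedAddCommGroup U] [InnerProductSpace ℝ U] [CompleteSpace U]
    [Module ℍᵐᵒᵖ U] [IsScalarTower ℝ ℍᵐᵒᵖ U]
    (A K : V →L[ℍᵐᵒᵖ] U) (hA : Function.Bijective A) (hK : IsCompactOperator ⇑K) :
    FiniteDimensional ℍᵐᵒᵖ (LinearMap.ker ((A + K : V →L[ℍᵐᵒᵖ] U) : V →ₗ[ℍᵐᵒᵖ] U)) ∧
      FiniteDimensional ℍᵐᵒᵖ (U ⧸ LinearMap.range ((A + K : V →L[ℍᵐᵒᵖ] U) : V →ₗ[ℍᵐᵒᵖ] U)) := by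
  let A' : V →L[ℝ] U := A.restrictScalars ℝ
  let K' : V →L[ℝ] U := K.restrictScalars ℝ
  have hA'inj : LinearMap.ker (A' : V →ₗ[ℝ] U) = ⊥ := LinearMap.ker_eq_bot.2 hA.1
  have hA'surj : LinearMap.range (A' : V →ₗ[ℝ] U) = ⊤ := LinearMap.range_eq_top.2 hA.2
  let e : V ≃L[ℝ] U := ContinuousLinearEquiv.ofBijective A' hA'inj hA'surj
  let C : V →L[ℝ] V := (e.symm : U →L[ℝ] V).comp K'
  have hC : IsCompactOperator ⇑C := by
    have h : ⇑C = ⇑(e.symm : U →L[ℝ] V) ∘ ⇑K := rfl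
    rw [h]
    exact hK.continuous_comp (e.symm : U →L[ℝ] V).continuous
  let S : V →L[ℝ] V := ContinuousLinearMap.id ℝ V + C
  have hSdef : ∀ x, S x = x + C x := fun x => rfl
  have hAS : ∀ x : V, (A + K) x = A' (S x) := by
    intro x
    show A x + K x = A' (x + C x)
    rw [map_add]
    congr 1
    show K x = A' (e.symm (K x))
    have h : A' (e.symm (K x)) = e (e.symm (K x)) := rfl
    rw [h, e.apply_symm_apply]
  constructor
  · -- kernel
    have hker_fd : FiniteDimensional ℝ (LinearMap.ker (S : V →ₗ[ℝ] V)) := riesz_ker C S hC hSdef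
    have hkerset : ((LinearMap.ker ((A + K : V →L[ℍᵐᵒᵖ] U) : V →ₗ[ℍᵐᵒᵖ] U)).restrictScalars ℝ) = LinearMap.ker (S : V →ₗ[ℝ] V) := by
      ext x
      simp only [Submodule.restrictScalars_mem, LinearMap.mem_ker]
      constructor
      · intro hx
        have h0 : A' (S x) = 0 := by rw [← hAS x]; exact hx
        exact hA.1 (show A (S x) = A 0 by rw [map_zero]; exact h0)
      · intro hx
        show (A + K) x = 0; rw [hAS x, show S x = 0 from hx, map_zero]
    have h1 : FiniteDimensional ℝ ((LinearMap.ker ((A + K : V →L[ℍᵐᵒᵖ] U) : V →ₗ[ℍᵐᵒᵖ] U)).restrictScalars ℝ) := by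
      rw [hkerset]; exact hker_fd
    haveI h2 : Module.Finite ℝ (LinearMap.ker ((A + K : V →L[ℍᵐᵒᵖ] U) : V →ₗ[ℍᵐᵒᵖ] U)) :=
      Module.Finite.equiv
        ((Submodule.restrictScalarsEquiv ℝ ℍᵐᵒᵖ V (LinearMap.ker ((A + K : V →L[ℍᵐᵒᵖ] U) : V →ₗ[ℍᵐᵒᵖ] U))).restrictScalars ℝ)
    exact Module.Finite.of_restrictScalars_finite ℝ ℍᵐᵒᵖ _
  · -- cokernel
    have hcoker : FiniteDimensional ℝ (V ⧸ LinearMap.range (S : V →ₗ[ℝ] V)) := riesz_coker C S hC hSdef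
    have hmap : Submodule.map ((e : V ≃ₗ[ℝ] U) : V →ₗ[ℝ] U) (LinearMap.range (S : V →ₗ[ℝ] V))
        = (LinearMap.range ((A + K : V →L[ℍᵐᵒᵖ] U) : V →ₗ[ℍᵐᵒᵖ] U)).restrictScalars ℝ := by
      ext y
      simp only [Submodule.mem_map, LinearMap.mem_range, Submodule.restrictScalars_mem]
      constructor
      · rintro ⟨x', ⟨x, rfl⟩, rfl⟩
        exact ⟨x, (hAS x).trans rfl⟩
      · rintro ⟨x, rfl⟩
        exact ⟨S x, ⟨x, rfl⟩, (Eq.refl (A' (S x))).trans (hAS x).symm⟩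
    have h1 : FiniteDimensional ℝ (U ⧸ (LinearMap.range ((A + K : V →L[ℍᵐᵒᵖ] U) : V →ₗ[ℍᵐᵒᵖ] U)).restrictScalars ℝ) :=
      Module.Finite.equiv
        (Submodule.Quotient.equiv (LinearMap.range (S : V →ₗ[ℝ] V))
          ((LinearMap.range ((A + K : V →L[ℍᵐᵒᵖ] U) : V →ₗ[ℍᵐᵒᵖ] U)).restrictScalars ℝ) (e : V ≃ₗ[ℝ] U) hmap)
    haveI h2 : Module.Finite ℝ (U ⧸ LinearMap.range ((A + K : V →L[ℍᵐᵒᵖ] U) : V →ₗ[ℍᵐᵒᵖ] U)) :=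
      Module.Finite.equiv
        (Submodule.Quotient.restrictScalarsEquiv ℝ (LinearMap.range ((A + K : V →L[ℍᵐᵒᵖ] U) : V →ₗ[ℍᵐᵒᵖ] U)))
    exact Module.Finite.of_restrictScalars_finite ℝ ℍᵐᵒᵖ _
end
end

section
/- If F is a finite-rank bounded right linear operator on a right quaternionic Hilbert space, then I + F is Fredholm with index zero. -/
noncomputable section

open MulOpposite RealInnerProductSpace Filter Topology

local notation "ℍ" => Quaternion ℝ

/-- The index of a (Fredholm) bounded right linear operator:
`ind A = dim ker A - dim coker A`. -/
def qind {V U : Type*} [NormedAddCommGroup V] [Module ℍᵐᵒᵖ V]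
    [NormedAddCommGroup U] [Module ℍᵐᵒᵖ U] (A : V →L[ℍᵐᵒᵖ] U) : ℤ :=
  (Module.finrank ℍᵐᵒᵖ (LinearMap.ker (A : V →ₗ[ℍᵐᵒᵖ] U)) : ℤ) -
    (Module.finrank ℍᵐᵒᵖ (U ⧸ LinearMap.range (A : V →ₗ[ℍᵐᵒᵖ] U)) : ℤ)

/-- If `F` is a finite-rank bounded right linear operator on a right quaternionic Hilbert
space, then `I + F` is Fredholm with index zero. -/
theorem id_add_finiteRank_index_zero
    {V : Type*}
    [NormedAddCommGroup V] [InnerProductSpace ℝ V] [CompleteSpace V]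
    [Module ℍᵐᵒᵖ V] [IsScalarTower ℝ ℍᵐᵒᵖ V]
    (F : V →L[ℍᵐᵒᵖ] V) (hF : FiniteDimensional ℍᵐᵒᵖ (LinearMap.range (F : V →ₗ[ℍᵐᵒᵖ] V))) :
    (FiniteDimensional ℍᵐᵒᵖ (LinearMap.ker ((ContinuousLinearMap.id ℍᵐᵒᵖ V + F : V →L[ℍᵐᵒᵖ] V) : V →ₗ[ℍᵐᵒᵖ] V)) ∧
        FiniteDimensional ℍᵐᵒᵖ (V ⧸ LinearMap.range ((ContinuousLinearMap.id ℍᵐᵒᵖ V + F : V →L[ℍᵐᵒᵖ] V) : V →ₗ[ℍᵐᵒᵖ] V))) ∧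
      qind (ContinuousLinearMap.id ℍᵐᵒᵖ V + F) = 0 := by
  set T : V →L[ℍᵐᵒᵖ] V := ContinuousLinearMap.id ℍᵐᵒᵖ V + F with hTdef
  have hTapp : ∀ x : V, T x = x + F x := fun x => rfl
  set W : Submodule ℍᵐᵒᵖ V := LinearMap.range (F : V →ₗ[ℍᵐᵒᵖ] V) with hWdef
  have hFW : ∀ x : V, F x ∈ W := fun x => ⟨x, rfl⟩
  have hmap : ∀ x ∈ W, (T : V →ₗ[ℍᵐᵒᵖ] V) x ∈ W := by
    intro x hx
    have h : (T : V →ₗ[ℍᵐᵒᵖ] V) x = x + F x := hTapp x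
    rw [h]
    exact W.add_mem hx (hFW x)
  set g : W →ₗ[ℍᵐᵒᵖ] W := (T : V →ₗ[ℍᵐᵒᵖ] V).restrict hmap with hgdef
  have hgapp : ∀ (w : W), ((g w : W) : V) = T (w : V) := fun w => rfl
  have hFDW : FiniteDimensional ℍᵐᵒᵖ W := hF
  -- elements of ker T lie in W
  have hkerW : ∀ x : V, T x = 0 → x ∈ W := by
    intro x hx
    have h : x + F x = 0 := by rw [← hTapp x, hx]
    have : x = -(F x) := by
      have := eq_neg_of_add_eq_zero_left h
      exact this
    rw [this]
    exact W.neg_mem (hFW x)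
  -- ker T = map of ker g
  have hker : LinearMap.ker (T : V →ₗ[ℍᵐᵒᵖ] V) = Submodule.map W.subtype (LinearMap.ker g) := by
    ext x
    constructor
    · intro hx
      have hx0 : T x = 0 := hx
      refine ⟨⟨x, hkerW x hx0⟩, ?_, rfl⟩
      apply Subtype.ext
      rw [hgapp]
      exact hx0
    · rintro ⟨⟨y, hyW⟩, hy, rfl⟩
      have : T y = 0 := by
        have := congrArg (Subtype.val) hy
        simpa [hgapp] using this
      exact this
  -- the map from W to the cokernel of T
  set φ : W →ₗ[ℍᵐᵒᵖ] V ⧸ LinearMap.range (T : V →ₗ[ℍᵐᵒᵖ] V) :=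
    (LinearMap.range (T : V →ₗ[ℍᵐᵒᵖ] V)).mkQ ∘ₗ W.subtype with hφdef
  have hφapp : ∀ w : W, φ w = (LinearMap.range (T : V →ₗ[ℍᵐᵒᵖ] V)).mkQ (w : V) := fun w => rfl
  have hφsurj : Function.Surjective φ := by
    intro q
    obtain ⟨v, rfl⟩ := (LinearMap.range (T : V →ₗ[ℍᵐᵒᵖ] V)).mkQ_surjective q
    refine ⟨⟨-(F v), W.neg_mem (hFW v)⟩, ?_⟩
    rw [hφapp]
    show (LinearMap.range (T : V →ₗ[ℍᵐᵒᵖ] V)).mkQ (-(F v)) = (LinearMap.range (T : V →ₗ[ℍᵐᵒᵖ] V)).mkQ v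
    rw [Submodule.mkQ_apply, Submodule.mkQ_apply, Submodule.Quotient.eq]
    refine ⟨-v, ?_⟩
    rw [ContinuousLinearMap.coe_coe, hTapp (-v), map_neg]
    abel
  have hφker : LinearMap.ker φ = LinearMap.range g := by
    ext w
    constructor
    · intro hw
      have hw' : (w : V) ∈ LinearMap.range (T : V →ₗ[ℍᵐᵒᵖ] V) := by
        have : (LinearMap.range (T : V →ₗ[ℍᵐᵒᵖ] V)).mkQ (w : V) = 0 := hw
        rwa [Submodule.mkQ_apply, Submodule.Quotient.mk_eq_zero] at this
      obtain ⟨x, hx⟩ := hw'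
      have hxW : x ∈ W := by
        have hx' : x = (w : V) + -(F x) := by
          have := hTapp x
          rw [ContinuousLinearMap.coe_coe, this] at hx
          have : x = (x + F x) + -(F x) := by abel
          rw [hx] at this
          exact this
        rw [hx']
        exact W.add_mem w.2 (W.neg_mem (hFW x))
      refine ⟨⟨x, hxW⟩, ?_⟩
      apply Subtype.ext
      rw [hgapp]
      exact hx
    · rintro ⟨x, rfl⟩
      show (LinearMap.range (T : V →ₗ[ℍᵐᵒᵖ] V)).mkQ ((g x : W) : V) = 0
      rw [hgapp, Submodule.mkQ_apply, Submodule.Quotient.mk_eq_zero]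
      exact ⟨(x : V), rfl⟩
  -- equivalences
  have e2 : (W ⧸ LinearMap.range g) ≃ₗ[ℍᵐᵒᵖ] (V ⧸ LinearMap.range (T : V →ₗ[ℍᵐᵒᵖ] V)) := by
    rw [← hφker]
    exact φ.quotKerEquivOfSurjective hφsurj
  have hkerFD : FiniteDimensional ℍᵐᵒᵖ (LinearMap.ker (T : V →ₗ[ℍᵐᵒᵖ] V)) := by
    rw [hker]
    exact Module.Finite.map _ _
  have hcokerFD : FiniteDimensional ℍᵐᵒᵖ (V ⧸ LinearMap.range (T : V →ₗ[ℍᵐᵒᵖ] V)) :=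
    LinearEquiv.finiteDimensional e2
  refine ⟨⟨hkerFD, hcokerFD⟩, ?_⟩
  have h1 : Module.finrank ℍᵐᵒᵖ (LinearMap.ker (T : V →ₗ[ℍᵐᵒᵖ] V)) =
      Module.finrank ℍᵐᵒᵖ (LinearMap.ker g) := by
    rw [hker]
    exact Submodule.finrank_map_subtype_eq W (LinearMap.ker g)
  have h2 : Module.finrank ℍᵐᵒᵖ (V ⧸ LinearMap.range (T : V →ₗ[ℍᵐᵒᵖ] V)) =
      Module.finrank ℍᵐᵒᵖ (W ⧸ LinearMap.range g) := e2.symm.finrank_eq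
  have h3 := LinearMap.finrank_range_add_finrank_ker g
  have h4 := Submodule.finrank_quotient_add_finrank (LinearMap.range g)
  unfold qind
  rw [h1, h2]
  omega
end
end
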